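/- Let θ, ω : ℕ⁺ → ℝ be sequences satisfying: (i) ω(l) + l → +∞ as l → ∞; (ii) Σ_{l≥1} 2^{-ω(l) - θ(l)} < ∞; (iii) there exists a constant C ∈ ℝ with θ(l) ≥ C for all l. Define F_{θ,ω} : ℝ → ℝ by F_{θ,ω}(x) = (1/l²)·2^{-θ(l)} if x ∈ [2^{-l}, 2^{-l} + 2^{-ω(l)}] for some integer l ≥ 1, and F_{θ,ω}(x) = 0 otherwise. Then the Hölder exponent of F_{θ,ω} at 0 equals liminf_{l→∞} θ(l)/l. -/

import Mathlib

open MeasureTheory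

/-- `X ∈ C^α(x0)`. -/
def HolderAt (X : ℝ → ℝ) (x0 α : ℝ) : Prop :=
  ∃ C : ℝ, 0 < C ∧ ∃ P : Polynomial ℝ,
    (P = 0 ∨ (P.natDegree : ℝ) < α) ∧
    ∃ δ : ℝ, 0 < δ ∧ ∀ x : ℝ, |x - x0| < δ → |X x - P.eval x| ≤ C * |x - x0| ^ α

/-- The Hölder exponent of `X` at `x0`: `h(x0) = sup {α ≥ 0 : X ∈ C^α(x0)}`. -/
noncomputable def holderExponent (X : ℝ → ℝ) (x0 : ℝ) : EReal :=
  sSup (Real.toEReal '' {α : ℝ | 0 ≤ α ∧ HolderAt X x0 α})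

/-- The function `F_{θ,ω}`: equal to `(1/l²) 2^{-θ(l)}` on `[2^{-l}, 2^{-l} + 2^{-ω(l)}]`
for integers `l ≥ 1`, and `0` elsewhere. -/
noncomputable def Fcomb (θ ω : ℕ → ℝ) (x : ℝ) : ℝ :=
  ∑' l : ℕ,
    if 1 ≤ l ∧ (2 : ℝ) ^ (-(l : ℝ)) ≤ x ∧ x ≤ (2 : ℝ) ^ (-(l : ℝ)) + (2 : ℝ) ^ (-ω l)
    then (1 / (l : ℝ) ^ 2) * (2 : ℝ) ^ (-θ l) else 0

open Filter Polynomial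


-- polynomial eval-0 lemma
lemma my_eval_zero (P : Polynomial ℝ) (α C δ : ℝ) (hδ : 0 < δ) (hα : 0 < α)
    (hb : ∀ x : ℝ, -δ < x → x < 0 → |P.eval x| ≤ C * |x| ^ α) : P.eval 0 = 0 := by
  have hev : ∀ᶠ x in nhdsWithin (0:ℝ) (Set.Iio 0), |P.eval x| ≤ C * |x| ^ α := by
    filter_upwards [self_mem_nhdsWithin,
      eventually_nhdsWithin_of_eventually_nhds
        (eventually_abs_sub_lt (0:ℝ) hδ)] with x hx1 hx2
    have : -δ < x := by
      have := abs_lt.mp (by simpa using hx2)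
      linarith [this.1]
    exact hb x this hx1
  have h1 : Filter.Tendsto (fun x => |P.eval x|) (nhdsWithin (0:ℝ) (Set.Iio 0))
      (nhds |P.eval 0|) :=
    ((P.continuous_aeval.abs).tendsto 0).mono_left nhdsWithin_le_nhds
  have h2 : Filter.Tendsto (fun x : ℝ => C * |x| ^ α) (nhdsWithin (0:ℝ) (Set.Iio 0))
      (nhds 0) := by
    have hc : ContinuousAt (fun y : ℝ => y ^ α) |(0:ℝ)| := by
      simpa using Real.continuousAt_rpow_const 0 α (Or.inr hα.le)
    have : Filter.Tendsto (fun x : ℝ => |x| ^ α) (nhds (0:ℝ)) (nhds (|(0:ℝ)| ^ α)) :=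
      hc.tendsto.comp continuous_abs.continuousAt
    have h0 : |(0:ℝ)| ^ α = 0 := by
      simp [Real.zero_rpow hα.ne']
    have := (this.const_mul C).mono_left (nhdsWithin_le_nhds (s := Set.Iio 0))
    simpa [abs_zero, Real.zero_rpow hα.ne'] using this
  have : |P.eval 0| ≤ 0 :=
    le_of_tendsto_of_tendsto h1 h2 hev
  simpa using abs_nonpos_iff.mp this

lemma my_poly_zero : ∀ (n : ℕ) (P : Polynomial ℝ) (α C δ : ℝ), P.natDegree ≤ n → 0 < δ →
    (P.natDegree : ℝ) < α → (∀ x : ℝ, -δ < x → x < 0 → |P.eval x| ≤ C * |x| ^ α) → P = 0 := by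
  intro n
  induction n with
  | zero =>
    intro P α C δ hdeg hδ hα hb
    have hα0 : 0 < α := lt_of_le_of_lt (by positivity) hα
    have h0 : P.eval 0 = 0 := my_eval_zero P α C δ hδ hα0 hb
    have hd0 : P.natDegree = 0 := Nat.le_zero.mp hdeg
    have := Polynomial.eq_C_of_natDegree_eq_zero hd0
    rw [this] at h0 ⊢
    simpa using h0
  | succ n ih =>
    intro P α C δ hdeg hδ hα hb
    have hα0 : 0 < α := lt_of_le_of_lt (by positivity) hα
    have h0 : P.eval 0 = 0 := my_eval_zero P α C δ hδ hα0 hb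
    have hdvd : Polynomial.X ∣ P := Polynomial.X_dvd_iff.mpr
      (by rw [Polynomial.coeff_zero_eq_eval_zero]; exact h0)
    obtain ⟨Q, rfl⟩ := hdvd
    by_cases hQ : Q = 0
    · simp [hQ]
    have hdQ : (Polynomial.X * Q).natDegree = Q.natDegree + 1 := by
      rw [Polynomial.natDegree_mul Polynomial.X_ne_zero hQ, Polynomial.natDegree_X]; omega
    have hQ0 : Q = 0 := by
      apply ih Q (α - 1) C δ
      · omega
      · exact hδ
      · push_cast [hdQ] at hα ⊢; linarith
      · intro x hx1 hx2
        have hx0 : (0:ℝ) < |x| := abs_pos.mpr (ne_of_lt hx2)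
        have hbx := hb x hx1 hx2
        rw [Polynomial.eval_mul, Polynomial.eval_X, abs_mul] at hbx
        have hsplit : |x| ^ α = |x| * |x| ^ (α - 1) := by
          rw [← Real.rpow_one_add' (le_of_lt hx0) (by simpa using hα0.ne')]
          ring_nf
        rw [hsplit] at hbx
        have := (mul_le_mul_iff_right₀ hx0).mp (by linarith [hbx] : |x| * |Q.eval x| ≤ |x| * (C * |x| ^ (α - 1)))
        exact this
    simp [hQ0]


section helpers
variable (θ ω : ℕ → ℝ) (x : ℝ)

noncomputable abbrev Fterm (l : ℕ) : ℝ :=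
  if 1 ≤ l ∧ (2 : ℝ) ^ (-(l : ℝ)) ≤ x ∧ x ≤ (2 : ℝ) ^ (-(l : ℝ)) + (2 : ℝ) ^ (-ω l)
  then (1 / (l : ℝ) ^ 2) * (2 : ℝ) ^ (-θ l) else 0

lemma Fterm_nonneg (l : ℕ) : 0 ≤ Fterm θ ω x l := by
  unfold Fterm; split <;> positivity

lemma Fterm_le {C0 : ℝ} (h3 : ∀ l : ℕ, 1 ≤ l → C0 ≤ θ l) (l : ℕ) :
    Fterm θ ω x l ≤ (1 / (l : ℝ) ^ 2) * (2 : ℝ) ^ (-C0) := by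
  unfold Fterm
  split
  · rename_i h
    apply mul_le_mul_of_nonneg_left _ (by positivity)
    exact Real.rpow_le_rpow_of_exponent_le one_le_two (by linarith [h3 l h.1])
  · positivity

lemma summable_majorant (C0 : ℝ) :
    Summable (fun l : ℕ => (1 / (l : ℝ) ^ 2) * (2 : ℝ) ^ (-C0)) :=
  (Real.summable_one_div_nat_pow.mpr one_lt_two).mul_right _

lemma summable_Fterm {C0 : ℝ} (h3 : ∀ l : ℕ, 1 ≤ l → C0 ≤ θ l) :
    Summable (Fterm θ ω x) :=
  Summable.of_nonneg_of_le (Fterm_nonneg θ ω x) (Fterm_le θ ω x h3) (summable_majorant C0)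

lemma Fcomb_nonpos (hx : x ≤ 0) : Fcomb θ ω x = 0 := by
  unfold Fcomb
  have : ∀ l : ℕ, Fterm θ ω x l = 0 := by
    intro l
    apply if_neg
    rintro ⟨-, h2, -⟩
    have : (0:ℝ) < (2 : ℝ) ^ (-(l : ℝ)) := Real.rpow_pos_of_pos two_pos _
    linarith
  exact (tsum_congr this).trans tsum_zero

lemma Fcomb_nonneg : 0 ≤ Fcomb θ ω x :=
  tsum_nonneg (Fterm_nonneg θ ω x)

lemma Fcomb_le {C0 : ℝ} (h3 : ∀ l : ℕ, 1 ≤ l → C0 ≤ θ l) :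
    Fcomb θ ω x ≤ (∑' l : ℕ, 1 / (l : ℝ) ^ 2) * (2 : ℝ) ^ (-C0) := by
  unfold Fcomb
  rw [← tsum_mul_right]
  exact Summable.tsum_le_tsum (Fterm_le θ ω x h3) (summable_Fterm θ ω x h3) (summable_majorant C0)

lemma ksum_pos : (0:ℝ) < ∑' l : ℕ, 1 / (l : ℝ) ^ 2 := by
  have hs : Summable (fun l : ℕ => 1 / (l : ℝ) ^ 2) := Real.summable_one_div_nat_pow.mpr one_lt_two
  have h1 : (1:ℝ) / ((1:ℕ):ℝ) ^ 2 ≤ ∑' l : ℕ, 1 / (l : ℝ) ^ 2 :=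
    Summable.le_tsum hs 1 (fun i _ => by positivity)
  simp only [one_div] at h1 ⊢
  norm_num at h1
  linarith

end helpers


lemma holder_zero (θ ω : ℕ → ℝ) {C0 : ℝ} (h3 : ∀ l : ℕ, 1 ≤ l → C0 ≤ θ l) :
    HolderAt (Fcomb θ ω) 0 0 := by
  refine ⟨(∑' l : ℕ, 1 / (l : ℝ) ^ 2) * (2:ℝ) ^ (-C0) + 1,
    add_pos_of_nonneg_of_pos (mul_nonneg ksum_pos.le (Real.rpow_pos_of_pos two_pos _).le) one_pos, 0, Or.inl rfl,
    1, one_pos, ?_⟩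
  intro x _
  simp only [Polynomial.eval_zero, sub_zero, Real.rpow_zero, mul_one]
  rw [abs_of_nonneg (Fcomb_nonneg θ ω x)]
  linarith [Fcomb_le θ ω x h3]

lemma holder_lower (θ ω : ℕ → ℝ) {C0 : ℝ} (h3 : ∀ l : ℕ, 1 ≤ l → C0 ≤ θ l) (α β : ℝ) (h0 : 0 ≤ α) (hab : α ≤ β) (L : ℕ)
    (hL : ∀ l : ℕ, L ≤ l → 1 ≤ l → β * l ≤ θ l) : HolderAt (Fcomb θ ω) 0 α := by
  refine ⟨∑' l : ℕ, 1 / (l : ℝ) ^ 2, ksum_pos, 0, Or.inl rfl,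
    min ((2:ℝ) ^ (-(L:ℝ))) 1, lt_min (Real.rpow_pos_of_pos two_pos _) one_pos, ?_⟩
  intro x hx
  simp only [Polynomial.eval_zero, sub_zero] at hx ⊢
  rcases le_or_gt x 0 with hx0 | hx0
  · rw [Fcomb_nonpos θ ω x hx0]
    have : (0:ℝ) ≤ |x| ^ α := Real.rpow_nonneg (abs_nonneg x) α
    have hk := ksum_pos
    simpa using mul_nonneg hk.le this
  · have hxabs : |x| = x := abs_of_pos hx0
    rw [hxabs] at hx ⊢
    have hx1 : x ≤ 1 := le_of_lt (lt_of_lt_of_le hx (min_le_right _ _))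
    have hxL : x < (2:ℝ) ^ (-(L:ℝ)) := lt_of_lt_of_le hx (min_le_left _ _)
    rw [abs_of_nonneg (Fcomb_nonneg θ ω x)]
    have hbound : ∀ l : ℕ, Fterm θ ω x l ≤ (1 / (l : ℝ) ^ 2) * x ^ α := by
      intro l
      unfold Fterm
      split
      · rename_i h
        obtain ⟨hl1, hlx, -⟩ := h
        apply mul_le_mul_of_nonneg_left _ (by positivity)
        have hLl : L ≤ l := by
          have h2 : (2:ℝ) ^ (-(l:ℝ)) < (2:ℝ) ^ (-(L:ℝ)) := lt_of_le_of_lt hlx hxL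
          have := (Real.rpow_lt_rpow_left_iff one_lt_two).mp h2
          have : (L:ℝ) < (l:ℝ) := by linarith
          exact_mod_cast this.le
        have hθ : β * l ≤ θ l := hL l hLl hl1
        calc (2:ℝ) ^ (-θ l) ≤ (2:ℝ) ^ (-(β * (l:ℝ))) :=
              Real.rpow_le_rpow_of_exponent_le one_le_two (neg_le_neg hθ)
          _ = ((2:ℝ) ^ (-(l:ℝ))) ^ β := by
              rw [show -(β * (l:ℝ)) = (-(l:ℝ)) * β by ring, Real.rpow_mul (by norm_num)]
          _ ≤ x ^ β := Real.rpow_le_rpow (Real.rpow_pos_of_pos two_pos _).le hlx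
              (le_trans h0 hab)
          _ ≤ x ^ α := Real.rpow_le_rpow_of_exponent_ge hx0 hx1 hab
      · positivity
    calc Fcomb θ ω x ≤ ∑' l : ℕ, (1 / (l : ℝ) ^ 2) * x ^ α := by
          refine Summable.tsum_le_tsum hbound ?_ ?_
          · exact summable_Fterm θ ω x h3
          · exact (Real.summable_one_div_nat_pow.mpr one_lt_two).mul_right _
      _ = (∑' l : ℕ, 1 / (l : ℝ) ^ 2) * x ^ α := tsum_mul_right

lemma holder_upper (θ ω : ℕ → ℝ) {C0 : ℝ} (h3 : ∀ l : ℕ, 1 ≤ l → C0 ≤ θ l)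
    (α : ℝ) (h0 : 0 ≤ α) (hH : HolderAt (Fcomb θ ω) 0 α) {ε : ℝ} (hε : 0 < ε) :
    ∀ᶠ l in Filter.atTop, α - ε ≤ θ l / (l : ℝ) := by
  obtain ⟨C, hC, P, hP, δ, hδ, hb⟩ := hH
  -- the polynomial is zero
  have hP0 : P = 0 := by
    rcases hP with h | hdeg
    · exact h
    · apply my_poly_zero P.natDegree P α C δ le_rfl hδ hdeg
      intro x hx1 hx2
      have hxd : |x - 0| < δ := by
        rw [sub_zero, abs_of_neg hx2]; linarith
      have := hb x hxd
      rw [Fcomb_nonpos θ ω x hx2.le, zero_sub, abs_neg, sub_zero] at this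
      exact this
  subst hP0
  simp only [Polynomial.eval_zero, sub_zero] at hb
  -- eventual facts
  have hgeom : Filter.Tendsto (fun l : ℕ => (2:ℝ) ^ (-(l:ℝ))) Filter.atTop (nhds 0) := by
    have : (fun l : ℕ => (2:ℝ) ^ (-(l:ℝ))) = fun l : ℕ => ((2:ℝ)⁻¹) ^ l := by
      funext l
      rw [Real.rpow_neg (by norm_num), Real.rpow_natCast, inv_pow]
    rw [this]
    exact tendsto_pow_atTop_nhds_zero_of_lt_one (by norm_num) (by norm_num)
  have ev1 : ∀ᶠ l : ℕ in Filter.atTop, (2:ℝ) ^ (-(l:ℝ)) < δ :=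
    hgeom.eventually_lt_const hδ
  have hr1 : (2:ℝ) ^ (-ε) < 1 := Real.rpow_lt_one_of_one_lt_of_neg one_lt_two (by linarith)
  have hr0 : (0:ℝ) ≤ (2:ℝ) ^ (-ε) := (Real.rpow_pos_of_pos two_pos _).le
  have htend : Filter.Tendsto (fun l : ℕ => C * ((l:ℝ) ^ 2 * ((2:ℝ) ^ (-ε)) ^ l))
      Filter.atTop (nhds 0) := by
    have := (tendsto_pow_const_mul_const_pow_of_lt_one 2 hr0 hr1).const_mul C
    simpa using this
  have ev2 : ∀ᶠ l : ℕ in Filter.atTop, C * ((l:ℝ) ^ 2 * ((2:ℝ) ^ (-ε)) ^ l) ≤ 1 :=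
    (htend.eventually_lt_const one_pos).mono (fun _ h => h.le)
  filter_upwards [ev1, ev2, Filter.eventually_ge_atTop 1] with l hl1 hl2 hl3
  -- main computation
  have hlR : (1:ℝ) ≤ (l:ℝ) := by exact_mod_cast hl3
  have hlpos : (0:ℝ) < (l:ℝ) := by linarith
  set x := (2:ℝ) ^ (-(l:ℝ)) with hxdef
  have hxpos : 0 < x := Real.rpow_pos_of_pos two_pos _
  have hterm : (1 / (l : ℝ) ^ 2) * (2:ℝ) ^ (-θ l) ≤ Fcomb θ ω x := by
    have hcond : 1 ≤ l ∧ (2:ℝ) ^ (-(l:ℝ)) ≤ x ∧ x ≤ (2:ℝ) ^ (-(l:ℝ)) + (2:ℝ) ^ (-ω l) := by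
      refine ⟨hl3, le_rfl, ?_⟩
      have : (0:ℝ) < (2:ℝ) ^ (-ω l) := Real.rpow_pos_of_pos two_pos _
      linarith
    have := Summable.le_tsum (summable_Fterm θ ω x h3) l (fun i _ => Fterm_nonneg θ ω x i)
    unfold Fterm at this
    rw [if_pos hcond] at this
    exact this
  have hFx : Fcomb θ ω x ≤ C * x ^ α := by
    have hxd : |x| < δ := by rw [abs_of_pos hxpos]; exact hl1
    have := hb x hxd
    rw [abs_of_pos hxpos] at this
    rwa [abs_of_nonneg (Fcomb_nonneg θ ω x)] at this
  -- 2^{-θ l} ≤ C l² 2^{-α l}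
  have hl2pos : (0:ℝ) < (l:ℝ) ^ 2 := by positivity
  have key1 : (2:ℝ) ^ (-θ l) ≤ C * (l:ℝ) ^ 2 * (2:ℝ) ^ (-(α * l)) := by
    have hxα : x ^ α = (2:ℝ) ^ (-(α * (l:ℝ))) := by
      rw [hxdef, ← Real.rpow_mul (by norm_num)]
      ring_nf
    have h' : (1 / (l : ℝ) ^ 2) * (2:ℝ) ^ (-θ l) ≤ C * (2:ℝ) ^ (-(α * l)) := by
      rw [← hxα]; exact le_trans hterm hFx
    have := mul_le_mul_of_nonneg_left h' hl2pos.le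
    rw [← mul_assoc, mul_one_div, div_self (by positivity), one_mul] at this
    calc (2:ℝ) ^ (-θ l) ≤ (l:ℝ) ^ 2 * (C * (2:ℝ) ^ (-(α * l))) := this
      _ = C * (l:ℝ) ^ 2 * (2:ℝ) ^ (-(α * l)) := by ring
  -- C l² 2^{-α l} ≤ 2^{-(α-ε) l}
  have key2 : C * (l:ℝ) ^ 2 * (2:ℝ) ^ (-(α * l)) ≤ (2:ℝ) ^ (-((α - ε) * l)) := by
    have hpow : ((2:ℝ) ^ (-ε)) ^ l = (2:ℝ) ^ (-(ε * (l:ℝ))) := by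
      rw [← Real.rpow_natCast ((2:ℝ) ^ (-ε)) l, ← Real.rpow_mul (by norm_num)]
      ring_nf
    have hCl : C * (l:ℝ) ^ 2 ≤ (2:ℝ) ^ (ε * (l:ℝ)) := by
      have h2 : C * ((l:ℝ) ^ 2 * (2:ℝ) ^ (-(ε * (l:ℝ)))) ≤ 1 := by
        rw [← hpow]; exact hl2
      have hpos : (0:ℝ) < (2:ℝ) ^ (-(ε * (l:ℝ))) := Real.rpow_pos_of_pos two_pos _
      have h3' : C * (l:ℝ) ^ 2 * (2:ℝ) ^ (-(ε * (l:ℝ))) ≤ 1 := by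
        calc C * (l:ℝ) ^ 2 * (2:ℝ) ^ (-(ε * (l:ℝ)))
            = C * ((l:ℝ) ^ 2 * (2:ℝ) ^ (-(ε * (l:ℝ)))) := by ring
          _ ≤ 1 := h2
      have hexp : (2:ℝ) ^ (-(ε * (l:ℝ))) * (2:ℝ) ^ (ε * (l:ℝ)) = 1 := by
        rw [← Real.rpow_add two_pos]; simp
      have := mul_le_mul_of_nonneg_right h3' (Real.rpow_pos_of_pos two_pos (ε * (l:ℝ))).le
      rw [one_mul, mul_assoc, hexp, mul_one] at this
      exact this
    have hpos' : (0:ℝ) < (2:ℝ) ^ (-(α * (l:ℝ))) := Real.rpow_pos_of_pos two_pos _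
    calc C * (l:ℝ) ^ 2 * (2:ℝ) ^ (-(α * (l:ℝ)))
        ≤ (2:ℝ) ^ (ε * (l:ℝ)) * (2:ℝ) ^ (-(α * (l:ℝ))) :=
          mul_le_mul_of_nonneg_right hCl hpos'.le
      _ = (2:ℝ) ^ (-((α - ε) * (l:ℝ))) := by
          rw [← Real.rpow_add two_pos]; ring_nf
  have key3 : (2:ℝ) ^ (-θ l) ≤ (2:ℝ) ^ (-((α - ε) * (l:ℝ))) := le_trans key1 key2
  have key4 : -θ l ≤ -((α - ε) * (l:ℝ)) :=
    (Real.rpow_le_rpow_left_iff one_lt_two).mp key3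
  have : (α - ε) * (l:ℝ) ≤ θ l := by linarith
  exact (le_div_iff₀ hlpos).mpr this



/-- if `ω(l) + l → ∞`, `Σ 2^{-ω(l)-θ(l)} < ∞` and `θ` is bounded below,
then the Hölder exponent of `F_{θ,ω}` at `0` is `liminf θ(l)/l`. -/
theorem stmt11 (θ ω : ℕ → ℝ)
    (h1 : Filter.Tendsto (fun l : ℕ => ω l + (l : ℝ)) Filter.atTop Filter.atTop)
    (h2 : Summable (fun l : ℕ => (2 : ℝ) ^ (-(ω l) - θ l)))
    (h3 : ∃ C : ℝ, ∀ l : ℕ, 1 ≤ l → C ≤ θ l) :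
    holderExponent (Fcomb θ ω) 0 =
      Filter.liminf (fun l : ℕ => ((θ l / (l : ℝ) : ℝ) : EReal)) Filter.atTop := by
  obtain ⟨C0, h3⟩ := h3
  set f : ℕ → EReal := fun l : ℕ => ((θ l / (l : ℝ) : ℝ) : EReal) with hf
  set LIM := Filter.liminf f Filter.atTop with hLIM
  set A := Real.toEReal '' {α : ℝ | 0 ≤ α ∧ HolderAt (Fcomb θ ω) 0 α} with hA
  have h0mem : ((0:ℝ) : EReal) ∈ A := ⟨0, ⟨le_rfl, holder_zero θ ω h3⟩, rfl⟩
  apply le_antisymm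
  · -- sSup A ≤ LIM
    apply sSup_le
    rintro a ⟨α, ⟨hα0, hH⟩, rfl⟩
    have hstep : ∀ ε : ℝ, 0 < ε → ((α - ε : ℝ) : EReal) ≤ LIM := by
      intro ε hε
      have hev := holder_upper θ ω h3 α hα0 hH hε
      have : Filter.liminf (fun _ : ℕ => ((α - ε : ℝ) : EReal)) Filter.atTop ≤ LIM := by
        have hle : ∀ᶠ l : ℕ in Filter.atTop,
            ((α - ε : ℝ) : EReal) ≤ f l := by
          filter_upwards [hev] with l hl
          exact EReal.coe_le_coe_iff.mpr hl
        exact Filter.liminf_le_liminf hle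
      rwa [Filter.liminf_const] at this
    by_contra hcon
    push_neg at hcon
    have hne_bot : LIM ≠ ⊥ := by
      intro hb
      have := hstep 1 one_pos
      rw [hb] at this
      exact (EReal.bot_lt_coe _).not_ge this
    have hne_top : LIM ≠ ⊤ := (hcon.trans (EReal.coe_lt_top α)).ne
    set r := LIM.toReal with hr
    have hLr : LIM = (r : EReal) := (EReal.coe_toReal hne_top hne_bot).symm
    have hle : ∀ ε : ℝ, 0 < ε → α - ε ≤ r := by
      intro ε hε
      have := hstep ε hε
      rw [hLr] at this
      exact EReal.coe_le_coe_iff.mp this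
    have : α ≤ r := by
      by_contra h
      push_neg at h
      have := hle ((α - r)/2) (by linarith)
      linarith
    rw [hLr] at hcon
    exact (EReal.coe_le_coe_iff.mpr this).not_gt hcon
  · -- LIM ≤ sSup A
    by_contra hcon
    push_neg at hcon
    obtain ⟨c, hc1, hc2⟩ := exists_between hcon
    have hc0 : (0:EReal) < c := lt_of_le_of_lt (le_sSup h0mem) hc1
    have hcnetop : c ≠ ⊤ := hc2.ne_top
    have hbot0 : (⊥:EReal) < (0:EReal) := by
      rw [show ((0:EReal)) = ((0:ℝ):EReal) by simp]
      exact EReal.bot_lt_coe 0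
    have hcnebot : c ≠ ⊥ := (hbot0.trans hc0).ne'
    set r := c.toReal with hrdef
    have hcr : c = (r : EReal) := (EReal.coe_toReal hcnetop hcnebot).symm
    have hr0 : 0 ≤ r := by
      have : ((0:ℝ):EReal) < (r:EReal) := by
        rw [← hcr]
        simpa using hc0
      exact (EReal.coe_lt_coe_iff.mp this).le
    obtain ⟨b, hb1, hb2⟩ := exists_between hc2
    have hbnetop : b ≠ ⊤ := hb2.ne_top
    have hbnebot : b ≠ ⊥ := ((hbot0.trans hc0).trans hb1).ne'
    set β := b.toReal with hβdef
    have hbβ : b = (β : EReal) := (EReal.coe_toReal hbnetop hbnebot).symm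
    have hrβ : r ≤ β := by
      have : (r:EReal) < (β:EReal) := by rw [← hcr, ← hbβ]; exact hb1
      exact (EReal.coe_lt_coe_iff.mp this).le
    have hev : ∀ᶠ l : ℕ in Filter.atTop, b < f l :=
      Filter.eventually_lt_of_lt_liminf hb2
    obtain ⟨L, hL⟩ := Filter.eventually_atTop.mp hev
    have hHr : HolderAt (Fcomb θ ω) 0 r := by
      apply holder_lower θ ω h3 r β hr0 hrβ L
      intro l hLl hl1
      have hlpos : (0:ℝ) < (l:ℝ) := by exact_mod_cast hl1
      have : b < f l := hL l hLl
      rw [hbβ, hf] at this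
      have hβl : β < θ l / (l:ℝ) := EReal.coe_lt_coe_iff.mp this
      have := (lt_div_iff₀ hlpos).mp hβl
      linarith
    have : c ≤ sSup A := by
      rw [hcr]
      exact le_sSup ⟨r, ⟨hr0, hHr⟩, rfl⟩
    exact hc1.not_ge this
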